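/- Let V be a type and F : Set V → Set V a monotone function. Define the induced operator G on binary relations over V by G(R) := (F({x | (x,x) ∈ R}))?, where S? := {(x,x) | x ∈ S} is the test relation. Then G is monotone with respect to inclusion of relations, and its least fixed point equals (lfp F)?, the test relation of the least fixed point of F. (This is the least-fixed-point case of the paper's theorem that the two-sorted syntax of L𝜇𝜇 translates into the minimal one-sorted syntax: the state formula μX.φ translates to a binary fixed point whose extension is the diagonal of the extension of μX.φ.) -/
import Mathlib


/-- the induced operator G(R) := (F({x | (x,x) ∈ R}))? is monotone
and its least fixed point is the test relation of lfp F. -/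
theorem stmt7 (V : Type*) (F : Set V → Set V) (hF : Monotone F) :
    let test : Set V → Set (V × V) :=
      fun S => {p | p.1 = p.2 ∧ p.1 ∈ S}
    let G : Set (V × V) → Set (V × V) :=
      fun R => test (F {x | (x, x) ∈ R})
    Monotone G ∧ IsLeast {R | G R = R} (test (OrderHom.lfp ⟨F, hF⟩)) := by
  intro test G
  have htest : Monotone test := fun S T h p hp => ⟨hp.1, h hp.2⟩
  have hG : Monotone G := fun R S h => htest (hF (fun x hx => h hx))
  have hfix : F (OrderHom.lfp ⟨F, hF⟩) = OrderHom.lfp ⟨F, hF⟩ :=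
    OrderHom.map_lfp ⟨F, hF⟩
  refine ⟨hG, ?_, ?_⟩
  · show G (test (OrderHom.lfp ⟨F, hF⟩)) = test (OrderHom.lfp ⟨F, hF⟩)
    have : {x | (x, x) ∈ test (OrderHom.lfp ⟨F, hF⟩)} = OrderHom.lfp ⟨F, hF⟩ := by
      ext x; simp [test]
    simp only [G, this, hfix]
  · intro R hR
    have hR' : G R = R := hR
    have hDfix : F {x | (x, x) ∈ R} = {x | (x, x) ∈ R} := by
      ext x
      constructor
      · intro hx
        have : (x, x) ∈ G R := ⟨rfl, hx⟩
        rw [hR'] at this; exact this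
      · intro hx
        rw [← hR'] at hx
        exact hx.2
    have hRD : R = test {x | (x, x) ∈ R} := by
      conv_lhs => rw [← hR']
      show test (F {x | (x, x) ∈ R}) = _
      rw [hDfix]
    have hle : OrderHom.lfp ⟨F, hF⟩ ≤ {x | (x, x) ∈ R} :=
      OrderHom.lfp_le ⟨F, hF⟩ (le_of_eq hDfix)
    calc test (OrderHom.lfp ⟨F, hF⟩) ≤ test {x | (x, x) ∈ R} := htest hle
      _ = R := hRD.symm
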